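/- arXiv:2502.06096 — 3 statements merged into one kernel-verified Lean document; each statement's English description precedes it below -/
import Mathlib

section
/- Universal threshold for the e-process-based localization statistic: for every t ∈ ℕ, every F₀ ∈ 𝒫₀, every F₁ ∈ 𝒫₁, and every α ∈ (0,1), P_{F₀,t,F₁}(M_t ≥ 2/α) ≤ α. This holds for any stopping time τ, any estimator T̂, and any forward and backward delay e-processes, with no further assumptions on the classes 𝒫₀, 𝒫₁. -/
open MeasureTheory ProbabilityTheory Filter Set
open scoped ENNReal NNReal

namespace SeqChange

variable {𝒳 : Type*} [MeasurableSpace 𝒳]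

/-- The σ-algebra on the sequence space generated by the coordinates with indices in `s`. -/
def coordSigma (𝒳 : Type*) [MeasurableSpace 𝒳] (s : Set ℕ) : MeasurableSpace (ℕ → 𝒳) :=
  ⨆ i ∈ s, MeasurableSpace.comap (fun ω : ℕ → 𝒳 => ω i) inferInstance

/-- The natural filtration `σ(X₁, …, Xₙ)` of the observation sequence (observations are
indexed from 1; coordinate 0 is unused). -/
def natFilt (𝒳 : Type*) [MeasurableSpace 𝒳] (n : ℕ) : MeasurableSpace (ℕ → 𝒳) :=
  coordSigma 𝒳 {i | 1 ≤ i ∧ i ≤ n}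

/-- `τ` is a stopping time with respect to the natural filtration of the observation
sequence, taking values in `ℕ ∪ {∞}`. -/
def IsStoppingTimeSeq (τ : (ℕ → 𝒳) → ℕ∞) : Prop :=
  ∀ n : ℕ, MeasurableSet[natFilt 𝒳 n] {ω | τ ω ≤ (n : ℕ∞)}

/-- `P` is the joint law of a sequence of independent observations `X₁, X₂, …` with
`Xₙ ~ ν n` for every `n ≥ 1`: a probability measure whose finite-dimensional
distributions on the coordinates with indices `≥ 1` are the corresponding products. -/
def IsProductLaw (P : Measure (ℕ → 𝒳)) (ν : ℕ → Measure 𝒳) : Prop :=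
  IsProbabilityMeasure P ∧
    ∀ s : Finset ℕ, (∀ i ∈ s, 1 ≤ i) → ∀ A : ℕ → Set 𝒳, (∀ i, MeasurableSet (A i)) →
      P {ω | ∀ i ∈ s, ω i ∈ A i} = ∏ i ∈ s, ν i (A i)

/-- `P` is the law `P_{F₀,T,F₁}`: independent coordinates, `Xₙ ~ F₀` for `n < T` and
`Xₙ ~ F₁` for `n ≥ T`. -/
def IsChangeLaw (P : Measure (ℕ → 𝒳)) (F₀ F₁ : Measure 𝒳) (T : ℕ) : Prop :=
  IsProductLaw P (fun n => if n < T then F₀ else F₁)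

/-- `P` is the law `P_{F₀,∞}`: all coordinates i.i.d. `F₀` (no change ever occurs). -/
def IsNoChangeLaw (P : Measure (ℕ → 𝒳)) (F₀ : Measure 𝒳) : Prop :=
  IsProductLaw P (fun _ => F₀)

/-- Under `Q`, the coordinates with indices in `I` are i.i.d. with law `ν`. -/
def IsIIDOn (Q : Measure (ℕ → 𝒳)) (ν : Measure 𝒳) (I : Set ℕ) : Prop :=
  IsProbabilityMeasure Q ∧
    ∀ s : Finset ℕ, (↑s ⊆ I) → ∀ A : ℕ → Set 𝒳, (∀ i, MeasurableSet (A i)) →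
      Q {ω | ∀ i ∈ s, ω i ∈ A i} = ∏ i ∈ s, ν (A i)

/-- Forward filtration `σ(X_t, …, X_n)`. -/
def fwdFilt (𝒳 : Type*) [MeasurableSpace 𝒳] (t n : ℕ) : MeasurableSpace (ℕ → 𝒳) :=
  coordSigma 𝒳 {i | t ≤ i ∧ i ≤ n}

/-- Backward filtration `σ(X_n, …, X_{t-1})`. -/
def bwdFilt (𝒳 : Type*) [MeasurableSpace 𝒳] (t n : ℕ) : MeasurableSpace (ℕ → 𝒳) :=
  coordSigma 𝒳 {i | n ≤ i ∧ i < t}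

/-- A forward `t`-delay e-process under the class `𝒫₁`: a nonnegative process
`(R n)_{n ≥ t}` adapted to the forward filtration `σ(X_t, …, X_n)` such that for every
`F₁ ∈ 𝒫₁`, every law `Q` under which `X_t, X_{t+1}, …` are i.i.d. `F₁`, and every
stopping time `κ ≥ t` of the forward filtration, `E_Q[R_κ] ≤ 1`. -/
def IsForwardEProcess (𝒫₁ : Set (Measure 𝒳)) (t : ℕ) (R : ℕ → (ℕ → 𝒳) → ℝ≥0∞) : Prop :=
  (∀ n, t ≤ n → Measurable[fwdFilt 𝒳 t n] (R n)) ∧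
    ∀ F₁ ∈ 𝒫₁, ∀ Q : Measure (ℕ → 𝒳), IsIIDOn Q F₁ {i | t ≤ i} →
      ∀ κ : (ℕ → 𝒳) → ℕ, (∀ ω, t ≤ κ ω) →
        (∀ n, MeasurableSet[fwdFilt 𝒳 t n] {ω | κ ω ≤ n}) →
        ∫⁻ ω, R (κ ω) ω ∂Q ≤ 1

/-- A backward `t`-delay e-process under the class `𝒫₀`: a nonnegative process
`(S n)_{1 ≤ n < t}` adapted to the backward filtration `σ(X_n, …, X_{t-1})` such that for
every `F₀ ∈ 𝒫₀`, every law `Q` under which `X₁, …, X_{t-1}` are i.i.d. `F₀`, and every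
stopping time `κ` of the backward filtration with `1 ≤ κ < t`, `E_Q[S_κ] ≤ 1`. -/
def IsBackwardEProcess (𝒫₀ : Set (Measure 𝒳)) (t : ℕ) (S : ℕ → (ℕ → 𝒳) → ℝ≥0∞) : Prop :=
  (∀ n, 1 ≤ n → n < t → Measurable[bwdFilt 𝒳 t n] (S n)) ∧
    ∀ F₀ ∈ 𝒫₀, ∀ Q : Measure (ℕ → 𝒳), IsIIDOn Q F₀ {i | 1 ≤ i ∧ i < t} →
      ∀ κ : (ℕ → 𝒳) → ℕ, (∀ ω, 1 ≤ κ ω ∧ κ ω < t) →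
        (∀ n, MeasurableSet[bwdFilt 𝒳 t n] {ω | n ≤ κ ω}) →
        ∫⁻ ω, S (κ ω) ω ∂Q ≤ 1

/-- The localization statistic `M_t` built from the estimator `T̂`, forward e-processes `R`
and backward e-processes `S`: `M_t = R^{(t)}_{T̂ - 1}` if `t < T̂ ≤ τ < ∞`, `M_t = 1` if
`t = T̂ ≤ τ < ∞`, `M_t = S^{(t)}_{T̂}` if `T̂ < t ≤ τ < ∞`, and `M_t = -∞` if `t > τ` or
`τ = ∞`. -/
noncomputable def eStat (τ : (ℕ → 𝒳) → ℕ∞) (That : (ℕ → 𝒳) → ℕ)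
    (R S : ℕ → ℕ → (ℕ → 𝒳) → ℝ≥0∞) (t : ℕ) (ω : ℕ → 𝒳) : EReal :=
  if (t : ℕ∞) ≤ τ ω ∧ τ ω ≠ ⊤ then
    if t < That ω then ((R t (That ω - 1) ω : ℝ≥0∞) : EReal)
    else if t = That ω then 1
    else ((S t (That ω) ω : ℝ≥0∞) : EReal)
  else ⊥

lemma coordSigma_le_pi (s : Set ℕ) : coordSigma 𝒳 s ≤ MeasurableSpace.pi := by
  refine iSup₂_le fun i _ => ?_
  exact measurable_iff_comap_le.mp (measurable_pi_apply i)

lemma coordSigma_mono {s u : Set ℕ} (h : s ⊆ u) : coordSigma 𝒳 s ≤ coordSigma 𝒳 u :=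
  iSup₂_le fun i hi =>
    le_iSup₂ (f := fun i (_ : i ∈ u) =>
      MeasurableSpace.comap (fun ω : ℕ → 𝒳 => ω i) inferInstance) i (h hi)


lemma fwdFilt_mono (t : ℕ) {m n : ℕ} (h : m ≤ n) : fwdFilt 𝒳 t m ≤ fwdFilt 𝒳 t n :=
  coordSigma_mono fun i hi => ⟨hi.1, hi.2.trans h⟩

lemma bwdFilt_mono (t : ℕ) {m n : ℕ} (h : n ≤ m) : bwdFilt 𝒳 t m ≤ bwdFilt 𝒳 t n :=
  coordSigma_mono fun i hi => ⟨h.trans hi.1, hi.2⟩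

lemma fwd_ville (t : ℕ) (R : ℕ → (ℕ → 𝒳) → ℝ≥0∞)
    (hmeas : ∀ n, t ≤ n → Measurable[fwdFilt 𝒳 t n] (R n))
    (Q : Measure (ℕ → 𝒳))
    (hstop : ∀ κ : (ℕ → 𝒳) → ℕ, (∀ ω, t ≤ κ ω) →
        (∀ n, MeasurableSet[fwdFilt 𝒳 t n] {ω | κ ω ≤ n}) →
        ∫⁻ ω, R (κ ω) ω ∂Q ≤ 1)
    (c : ℝ≥0∞) :
    c * Q {ω | ∃ n, t ≤ n ∧ c ≤ R n ω} ≤ 1 := by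
  set A : ℕ → Set (ℕ → 𝒳) := fun N => {ω | ∃ n, t ≤ n ∧ n ≤ N ∧ c ≤ R n ω} with hA
  have hmono : Monotone A := fun N M hNM ω ⟨n, h1, h2, h3⟩ => ⟨n, h1, h2.trans hNM, h3⟩
  have hUnion : (⋃ N, A N) = {ω | ∃ n, t ≤ n ∧ c ≤ R n ω} := by
    ext ω; constructor
    · rintro ⟨s, ⟨N, rfl⟩, n, h1, h2, h3⟩; exact ⟨n, h1, h3⟩
    · rintro ⟨n, h1, h3⟩; exact ⟨A n, ⟨n, rfl⟩, n, h1, le_rfl, h3⟩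
  have key : ∀ N, c * Q (A N) ≤ 1 := by
    intro N
    set M := max t N with hM
    set B : (ℕ → 𝒳) → Set ℕ := fun ω => {n | t ≤ n ∧ n ≤ N ∧ c ≤ R n ω} with hB
    set κ : (ℕ → 𝒳) → ℕ := fun ω => sInf (B ω ∪ {M}) with hκ
    have hne : ∀ ω, (B ω ∪ {M}).Nonempty := fun ω => ⟨M, Or.inr rfl⟩
    have hκmem : ∀ ω, κ ω ∈ B ω ∪ {M} := fun ω => Nat.sInf_mem (hne ω)
    have hκt : ∀ ω, t ≤ κ ω := by
      intro ω; rcases hκmem ω with h | h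
      · exact h.1
      · rw [Set.mem_singleton_iff] at h; rw [h]; exact le_max_left t N
    have hcross : ∀ ω ∈ A N, c ≤ R (κ ω) ω := by
      rintro ω ⟨n₀, h1, h2, h3⟩
      have hle : κ ω ≤ n₀ := Nat.sInf_le (Or.inl ⟨h1, h2, h3⟩)
      rcases hκmem ω with h | h
      · exact h.2.2
      · rw [Set.mem_singleton_iff] at h
        have hn0 : n₀ = M := le_antisymm (le_max_of_le_right h2) (h ▸ hle)
        rw [h, ← hn0]; exact h3
    have hstopmeas : ∀ n, MeasurableSet[fwdFilt 𝒳 t n] {ω | κ ω ≤ n} := by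
      intro n
      have hchar : {ω | κ ω ≤ n} =
          {ω | M ≤ n} ∪ ⋃ m, {ω | (t ≤ m ∧ m ≤ N ∧ m ≤ n) ∧ c ≤ R m ω} := by
        ext ω
        simp only [Set.mem_setOf_eq, Set.mem_union, Set.mem_iUnion]
        constructor
        · intro hκn
          rcases hκmem ω with h | h
          · exact Or.inr ⟨κ ω, ⟨h.1, h.2.1, hκn⟩, h.2.2⟩
          · rw [Set.mem_singleton_iff] at h; exact Or.inl (h ▸ hκn)
        · rintro (h | ⟨m, ⟨hm1, hm2, hm3⟩, hm4⟩)
          · exact le_trans (Nat.sInf_le (Or.inr rfl)) h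
          · exact le_trans (Nat.sInf_le (Or.inl ⟨hm1, hm2, hm4⟩)) hm3
      have hpart1 : MeasurableSet[fwdFilt 𝒳 t n] {ω : ℕ → 𝒳 | M ≤ n} := by
        by_cases h : M ≤ n
        · have he : {ω : ℕ → 𝒳 | M ≤ n} = Set.univ := by simp [h]
          rw [he]; exact MeasurableSet.univ
        · have he : {ω : ℕ → 𝒳 | M ≤ n} = ∅ := by simp [h]
          rw [he]; exact @MeasurableSet.empty _ (fwdFilt 𝒳 t n)
      have hpart2 : ∀ m, MeasurableSet[fwdFilt 𝒳 t n]
          {ω : ℕ → 𝒳 | (t ≤ m ∧ m ≤ N ∧ m ≤ n) ∧ c ≤ R m ω} := by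
        intro m
        by_cases h : t ≤ m ∧ m ≤ N ∧ m ≤ n
        · have he : {ω : ℕ → 𝒳 | (t ≤ m ∧ m ≤ N ∧ m ≤ n) ∧ c ≤ R m ω}
              = {ω | c ≤ R m ω} := by ext ω; simp [h]
          rw [he]
          exact fwdFilt_mono t h.2.2 _ ((hmeas m h.1) measurableSet_Ici)
        · have he : {ω : ℕ → 𝒳 | (t ≤ m ∧ m ≤ N ∧ m ≤ n) ∧ c ≤ R m ω} = ∅ := by
            ext ω; simp [h]
          rw [he]; exact @MeasurableSet.empty _ (fwdFilt 𝒳 t n)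
      rw [hchar]
      exact MeasurableSet.union hpart1 (MeasurableSet.iUnion hpart2)
    have hAmeas : MeasurableSet (A N) := by
      have : A N = ⋃ m, {ω | (t ≤ m ∧ m ≤ N) ∧ c ≤ R m ω} := by
        ext ω; simp only [hA, Set.mem_setOf_eq, Set.mem_iUnion]; tauto
      rw [this]
      apply MeasurableSet.iUnion
      intro m
      by_cases h : t ≤ m ∧ m ≤ N
      · have he : {ω : ℕ → 𝒳 | (t ≤ m ∧ m ≤ N) ∧ c ≤ R m ω} = {ω | c ≤ R m ω} := by
          ext ω; simp [h]
        rw [he]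
        exact coordSigma_le_pi _ _ ((hmeas m h.1) measurableSet_Ici)
      · have he : {ω : ℕ → 𝒳 | (t ≤ m ∧ m ≤ N) ∧ c ≤ R m ω} = ∅ := by ext ω; simp [h]
        rw [he]; exact MeasurableSet.empty
    calc c * Q (A N) = ∫⁻ ω, (A N).indicator (fun _ => c) ω ∂Q := by
          rw [lintegral_indicator_const hAmeas]
      _ ≤ ∫⁻ ω, R (κ ω) ω ∂Q := by
          apply lintegral_mono
          intro ω
          by_cases h : ω ∈ A N
          · rw [Set.indicator_of_mem h]; exact hcross ω h
          · rw [Set.indicator_of_notMem h]; exact zero_le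
      _ ≤ 1 := hstop κ hκt hstopmeas
  rw [← hUnion, (hmono.directed_le).measure_iUnion, ENNReal.mul_iSup]
  exact iSup_le key

lemma bwd_ville (t : ℕ) (ht : 2 ≤ t) (S : ℕ → (ℕ → 𝒳) → ℝ≥0∞)
    (hmeas : ∀ n, 1 ≤ n → n < t → Measurable[bwdFilt 𝒳 t n] (S n))
    (Q : Measure (ℕ → 𝒳))
    (hstop : ∀ κ : (ℕ → 𝒳) → ℕ, (∀ ω, 1 ≤ κ ω ∧ κ ω < t) →
        (∀ n, MeasurableSet[bwdFilt 𝒳 t n] {ω | n ≤ κ ω}) →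
        ∫⁻ ω, S (κ ω) ω ∂Q ≤ 1)
    (c : ℝ≥0∞) :
    c * Q {ω | ∃ n, 1 ≤ n ∧ n < t ∧ c ≤ S n ω} ≤ 1 := by
  set A : Set (ℕ → 𝒳) := {ω | ∃ n, 1 ≤ n ∧ n < t ∧ c ≤ S n ω} with hA
  set B : (ℕ → 𝒳) → Set ℕ := fun ω => {n | 1 ≤ n ∧ n < t ∧ c ≤ S n ω} with hB
  set κ : (ℕ → 𝒳) → ℕ := fun ω => sSup (B ω ∪ {1}) with hκ
  have hbdd : ∀ ω, BddAbove (B ω ∪ {1}) := by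
    intro ω
    refine ⟨t, fun n hn => ?_⟩
    rcases hn with h | h
    · exact h.2.1.le
    · rw [Set.mem_singleton_iff] at h; omega
  have hne : ∀ ω, (B ω ∪ {1}).Nonempty := fun ω => ⟨1, Or.inr rfl⟩
  have hκmem : ∀ ω, κ ω ∈ B ω ∪ {1} := fun ω => Nat.sSup_mem (hne ω) (hbdd ω)
  have hκ1 : ∀ ω, 1 ≤ κ ω ∧ κ ω < t := by
    intro ω
    constructor
    · exact le_csSup (hbdd ω) (Or.inr rfl)
    · rcases hκmem ω with h | h
      · exact h.2.1
      · rw [Set.mem_singleton_iff] at h; omega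
  have hcross : ∀ ω ∈ A, c ≤ S (κ ω) ω := by
    rintro ω ⟨n₀, h1, h2, h3⟩
    have hle : n₀ ≤ κ ω := le_csSup (hbdd ω) (Or.inl ⟨h1, h2, h3⟩)
    rcases hκmem ω with h | h
    · exact h.2.2
    · rw [Set.mem_singleton_iff] at h
      have hn0 : n₀ = 1 := by omega
      rw [h, ← hn0]; exact h3
  have hstopmeas : ∀ n, MeasurableSet[bwdFilt 𝒳 t n] {ω | n ≤ κ ω} := by
    intro n
    by_cases hn : n ≤ 1
    · have : {ω : ℕ → 𝒳 | n ≤ κ ω} = Set.univ := by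
        ext ω; simp only [Set.mem_setOf_eq, Set.mem_univ, iff_true]
        exact hn.trans (hκ1 ω).1
      rw [this]; exact MeasurableSet.univ
    · have hchar : {ω | n ≤ κ ω} = ⋃ m, {ω | (n ≤ m ∧ m < t) ∧ c ≤ S m ω} := by
        ext ω
        simp only [Set.mem_setOf_eq, Set.mem_iUnion]
        constructor
        · intro hκn
          rcases hκmem ω with h | h
          · exact ⟨κ ω, ⟨hκn, h.2.1⟩, h.2.2⟩
          · rw [Set.mem_singleton_iff] at h; omega
        · rintro ⟨m, ⟨hm1, hm2⟩, hm3⟩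
          exact hm1.trans (le_csSup (hbdd ω) (Or.inl ⟨by omega, hm2, hm3⟩))
      have hpart : ∀ m, MeasurableSet[bwdFilt 𝒳 t n]
          {ω : ℕ → 𝒳 | (n ≤ m ∧ m < t) ∧ c ≤ S m ω} := by
        intro m
        by_cases h : n ≤ m ∧ m < t
        · have he : {ω : ℕ → 𝒳 | (n ≤ m ∧ m < t) ∧ c ≤ S m ω} = {ω | c ≤ S m ω} := by
            ext ω; simp [h]
          rw [he]
          exact bwdFilt_mono t h.1 _ ((hmeas m (by omega) h.2) measurableSet_Ici)
        · have he : {ω : ℕ → 𝒳 | (n ≤ m ∧ m < t) ∧ c ≤ S m ω} = ∅ := by ext ω; simp [h]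
          rw [he]; exact @MeasurableSet.empty _ (bwdFilt 𝒳 t n)
      rw [hchar]
      exact MeasurableSet.iUnion hpart
  have hAmeas : MeasurableSet A := by
    have : A = ⋃ m, {ω | (1 ≤ m ∧ m < t) ∧ c ≤ S m ω} := by
      ext ω; simp only [hA, Set.mem_setOf_eq, Set.mem_iUnion]; tauto
    rw [this]
    apply MeasurableSet.iUnion
    intro m
    by_cases h : 1 ≤ m ∧ m < t
    · have he : {ω : ℕ → 𝒳 | (1 ≤ m ∧ m < t) ∧ c ≤ S m ω} = {ω | c ≤ S m ω} := by
        ext ω; simp [h]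
      rw [he]
      exact coordSigma_le_pi _ _ ((hmeas m h.1 h.2) measurableSet_Ici)
    · have he : {ω : ℕ → 𝒳 | (1 ≤ m ∧ m < t) ∧ c ≤ S m ω} = ∅ := by ext ω; simp [h]
      rw [he]; exact MeasurableSet.empty
  calc c * Q A = ∫⁻ ω, A.indicator (fun _ => c) ω ∂Q := by
        rw [lintegral_indicator_const hAmeas]
    _ ≤ ∫⁻ ω, S (κ ω) ω ∂Q := by
        apply lintegral_mono
        intro ω
        by_cases h : ω ∈ A
        · rw [Set.indicator_of_mem h]; exact hcross ω h
        · rw [Set.indicator_of_notMem h]; exact zero_le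
    _ ≤ 1 := hstop κ hκ1 hstopmeas


/-- Universal threshold for the e-process-based localization statistic:
for every `t`, every `F₀ ∈ 𝒫₀`, `F₁ ∈ 𝒫₁` and every `α ∈ (0,1)`,
`P_{F₀,t,F₁}(M_t ≥ 2/α) ≤ α`, for any stopping time `τ`, any estimator `T̂` and any
forward/backward delay e-processes, with no further assumptions on `𝒫₀, 𝒫₁`. -/
theorem universal_threshold
    {𝒳 : Type*} [MeasurableSpace 𝒳]
    (𝒫₀ 𝒫₁ : Set (Measure 𝒳)) (hdisj : Disjoint 𝒫₀ 𝒫₁)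
    (τ : (ℕ → 𝒳) → ℕ∞) (hτ : IsStoppingTimeSeq τ)
    (That : (ℕ → 𝒳) → ℕ)
    (hThat : ∀ ω, τ ω ≠ ⊤ → 1 ≤ That ω ∧ (That ω : ℕ∞) ≤ τ ω)
    (R S : ℕ → ℕ → (ℕ → 𝒳) → ℝ≥0∞)
    (hR : ∀ t : ℕ, 1 ≤ t → IsForwardEProcess 𝒫₁ t (R t))
    (hS : ∀ t : ℕ, 1 ≤ t → IsBackwardEProcess 𝒫₀ t (S t))
    (α : ℝ) (hα : α ∈ Set.Ioo (0 : ℝ) 1)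
    (t : ℕ) (ht : 1 ≤ t)
    (F₀ : Measure 𝒳) (hF₀ : F₀ ∈ 𝒫₀) (F₁ : Measure 𝒳) (hF₁ : F₁ ∈ 𝒫₁)
    (P : Measure (ℕ → 𝒳)) (hP : IsChangeLaw P F₀ F₁ t) :
    P {ω | ((2 / α : ℝ) : EReal) ≤ eStat τ That R S t ω} ≤ ENNReal.ofReal α := by
  obtain ⟨hα0, hα1⟩ := hα
  have hprob : IsProbabilityMeasure P := hP.1
  set c : ℝ≥0∞ := ENNReal.ofReal (2 / α) with hc
  have h2α : (0 : ℝ) < 2 / α := by positivity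
  have hiid1 : IsIIDOn P F₁ {i | t ≤ i} := by
    refine ⟨hP.1, fun s hs A hA => ?_⟩
    rw [hP.2 s (fun i hi => le_trans ht (hs hi)) A hA]
    exact Finset.prod_congr rfl fun i hi => by simp [not_lt.mpr (show t ≤ i from hs hi)]
  have hiid0 : IsIIDOn P F₀ {i | 1 ≤ i ∧ i < t} := by
    refine ⟨hP.1, fun s hs A hA => ?_⟩
    rw [hP.2 s (fun i hi => (hs hi).1) A hA]
    exact Finset.prod_congr rfl fun i hi => by simp [(hs hi).2]
  set Afwd : Set (ℕ → 𝒳) := {ω | ∃ n, t ≤ n ∧ c ≤ R t n ω} with hAfwd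
  set Abwd : Set (ℕ → 𝒳) := {ω | ∃ n, 1 ≤ n ∧ n < t ∧ c ≤ S t n ω} with hAbwd
  have hcinv : c⁻¹ = ENNReal.ofReal (α / 2) := by
    rw [hc, ← ENNReal.ofReal_inv_of_pos h2α, inv_div]
  have hfwd : P Afwd ≤ ENNReal.ofReal (α / 2) := by
    have h := fwd_ville t (R t) (hR t ht).1 P
      (fun κ h1 h2 => (hR t ht).2 F₁ hF₁ P hiid1 κ h1 h2) c
    rw [← hcinv]
    exact ENNReal.le_inv_iff_mul_le.mpr (by rwa [mul_comm] at h)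
  have hbwd : P Abwd ≤ ENNReal.ofReal (α / 2) := by
    rcases Nat.lt_or_ge t 2 with h2 | h2
    · have he : Abwd = ∅ := by
        ext ω
        simp only [hAbwd, Set.mem_setOf_eq, Set.mem_empty_iff_false, iff_false, not_exists]
        intro n hn
        omega
      rw [he, measure_empty]
      exact zero_le
    · have h := bwd_ville t h2 (S t) (hS t ht).1 P
        (fun κ h1 h2 => (hS t ht).2 F₀ hF₀ P hiid0 κ h1 h2) c
      rw [← hcinv]
      exact ENNReal.le_inv_iff_mul_le.mpr (by rwa [mul_comm] at h)
  have hcast : ((2 / α : ℝ) : EReal) = ((c : ℝ≥0∞) : EReal) := by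
    rw [hc, EReal.coe_ennreal_ofReal, max_eq_left h2α.le]
  have hsub : {ω | ((2 / α : ℝ) : EReal) ≤ eStat τ That R S t ω} ⊆ Afwd ∪ Abwd := by
    intro ω hω
    simp only [Set.mem_setOf_eq, eStat] at hω
    split_ifs at hω with h1 h2 h3
    · left
      refine ⟨That ω - 1, by omega, ?_⟩
      rw [hcast] at hω
      exact EReal.coe_ennreal_le_coe_ennreal_iff.mp hω
    · exfalso
      rw [show (1 : EReal) = ((1 : ℝ) : EReal) from rfl] at hω
      have hle : 2 / α ≤ (1 : ℝ) := EReal.coe_le_coe_iff.mp hω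
      have hgt : (1 : ℝ) < 2 / α := (one_lt_div hα0).mpr (by linarith)
      linarith
    · right
      have hT1 : 1 ≤ That ω := (hThat ω h1.2).1
      refine ⟨That ω, hT1, by omega, ?_⟩
      rw [hcast] at hω
      exact EReal.coe_ennreal_le_coe_ennreal_iff.mp hω
    · exact absurd hω (not_le.mpr (EReal.bot_lt_coe _))
  calc P {ω | ((2 / α : ℝ) : EReal) ≤ eStat τ That R S t ω}
      ≤ P (Afwd ∪ Abwd) := measure_mono hsub
    _ ≤ P Afwd + P Abwd := measure_union_le _ _
    _ ≤ ENNReal.ofReal (α / 2) + ENNReal.ofReal (α / 2) := add_le_add hfwd hbwd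
    _ = ENNReal.ofReal α := by
        rw [← ENNReal.ofReal_add (by linarith) (by linarith)]
        norm_num


end SeqChange
end

section
/- If (P₀*, P₁*) is a least favorable distribution pair in terms of risk for testing 𝒫₀ versus 𝒫₁, then Assumption 1 holds with F₀* = P₀* for the CUSUM change detector built from the likelihood ratio of P₁* to P₀*: for every P₀ ∈ 𝒫₀ and every t ∈ ℕ, P_{P₀,∞}(τ_cs ≥ t) ≥ P_{P₀*,∞}(τ_cs ≥ t), so that inf_{P₀∈𝒫₀} P_{P₀,∞}(τ_cs ≥ t) ≥ P_{P₀*,∞}(τ_cs ≥ t) for all t ∈ ℕ. -/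
open MeasureTheory ProbabilityTheory Filter Set
open scoped ENNReal NNReal

namespace SeqChange

variable {𝒳 : Type*} [MeasurableSpace 𝒳]

/-- The CUSUM stopping time built from the likelihood ratio `p₁*/p₀*` with threshold `A`:
`τ_cs := inf{n ≥ 1 : max_{1≤j≤n} ∏_{i=j}^{n} p₁*(X_i)/p₀*(X_i) ≥ A}`. -/
noncomputable def cusumTimeE (p₀ p₁ : 𝒳 → ℝ≥0∞) (A : ℝ≥0∞) (ω : ℕ → 𝒳) : ℕ∞ :=
  sInf {n : ℕ∞ | ∃ m : ℕ, 1 ≤ m ∧ n = (m : ℕ∞) ∧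
    ∃ j : ℕ, 1 ≤ j ∧ j ≤ m ∧ A ≤ ∏ i ∈ Finset.Icc j m, p₁ (ω i) / p₀ (ω i)}

set_option linter.unusedSectionVars false
set_option linter.unusedVariables false

/-- Any upper set in `ℝ≥0∞` is `∅`, `Ioi a`, or `Ici a`. -/
lemma upperSet_cases {U : Set ℝ≥0∞} (hU : IsUpperSet U) :
    U = ∅ ∨ U = Ioi (sInf U) ∨ U = Ici (sInf U) := by
  rcases eq_empty_or_nonempty U with h | h
  · exact Or.inl h
  by_cases hm : sInf U ∈ U
  · refine Or.inr (Or.inr ?_)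
    ext x; constructor
    · exact fun hx => sInf_le hx
    · exact fun hx => hU hx hm
  · refine Or.inr (Or.inl ?_)
    ext x; constructor
    · intro hx
      rcases lt_or_ge (sInf U) x with h' | h'
      · exact h'
      · exact absurd ((le_antisymm h' (sInf_le hx)) ▸ hx) hm
    · intro hx
      obtain ⟨u, hu, hux⟩ := exists_lt_of_csInf_lt h hx
      exact hU hux.le hu

lemma upperSet_measurable {U : Set ℝ≥0∞} (hU : IsUpperSet U) : MeasurableSet U := by
  rcases upperSet_cases hU with h | h | h <;> rw [h] <;> first | exact MeasurableSet.empty | exact measurableSet_Ioi | exact measurableSet_Ici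

/-- One-dimensional comparison: domination on open rays extends to all upper sets. -/
lemma upper_compare (ℓ : 𝒳 → ℝ≥0∞) (hℓ : Measurable ℓ)
    (μ μ' : Measure 𝒳) [IsProbabilityMeasure μ] [IsProbabilityMeasure μ']
    (h : ∀ a : ℝ≥0∞, μ (ℓ ⁻¹' Ioi a) ≤ μ' (ℓ ⁻¹' Ioi a))
    {U : Set ℝ≥0∞} (hU : IsUpperSet U) : μ (ℓ ⁻¹' U) ≤ μ' (ℓ ⁻¹' U) := by
  rcases upperSet_cases hU with hc | hc | hc
  · simp [hc]
  · rw [hc]; exact h _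
  set a := sInf U
  rcases eq_or_ne a 0 with ha | ha
  · rw [hc, ha]
    have : Ici (0:ℝ≥0∞) = univ := by ext x; simp
    rw [this, preimage_univ, measure_univ, measure_univ]
  obtain ⟨u, hmono, hmem, hlim⟩ := exists_seq_strictMono_tendsto' (pos_iff_ne_zero.2 ha)
  have hIci : Ici a = ⋂ n, Ioi (u n) := by
    ext x; simp only [mem_Ici, mem_iInter, mem_Ioi]
    constructor
    · exact fun hx n => lt_of_lt_of_le (hmem n).2 hx
    · exact fun hx => le_of_tendsto hlim (Eventually.of_forall fun n => (hx n).le)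
  have hpre : ℓ ⁻¹' U = ⋂ n, ℓ ⁻¹' Ioi (u n) := by
    rw [hc, hIci, preimage_iInter]
  rw [hpre]
  have hdir : Directed (· ⊇ ·) fun n => ℓ ⁻¹' Ioi (u n) := by
    refine directed_of_isDirected_le ?_
    intro m n hmn
    exact fun x hx => lt_of_le_of_lt (hmono.le_iff_le.2 hmn) hx
  have heq : μ' (⋂ n, ℓ ⁻¹' Ioi (u n)) = ⨅ n, μ' (ℓ ⁻¹' Ioi (u n)) := by
    refine Directed.measure_iInter (fun n => (hℓ measurableSet_Ioi).nullMeasurableSet) hdir ?_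
    exact ⟨0, measure_ne_top _ _⟩
  calc μ (⋂ n, ℓ ⁻¹' Ioi (u n)) ≤ ⨅ n, μ' (ℓ ⁻¹' Ioi (u n)) :=
        le_iInf fun n => le_trans (measure_mono (iInter_subset _ n)) (h (u n))
    _ = μ' (⋂ n, ℓ ⁻¹' Ioi (u n)) := heq.symm


/-- A one-variable `ℓ`-upper set is a preimage of an upper set. -/
lemma section_repr (ℓ : 𝒳 → ℝ≥0∞) {S : Set 𝒳}
    (h : ∀ x y, ℓ x ≤ ℓ y → x ∈ S → y ∈ S) :
    ∃ U : Set ℝ≥0∞, IsUpperSet U ∧ S = ℓ ⁻¹' U := by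
  refine ⟨{a | ∃ x ∈ S, ℓ x ≤ a}, ?_, ?_⟩
  · intro a b hab ⟨x, hx, hxa⟩; exact ⟨x, hx, hxa.trans hab⟩
  · ext y; constructor
    · exact fun hy => ⟨y, hy, le_rfl⟩
    · rintro ⟨x, hx, hxy⟩; exact h x y hxy hx

/-- Core comparison lemma for finite products. -/
lemma pi_compare (ℓ : 𝒳 → ℝ≥0∞) (hℓ : Measurable ℓ)
    (μ μ' : Measure 𝒳) [IsProbabilityMeasure μ] [IsProbabilityMeasure μ']
    (hcomp : ∀ U : Set ℝ≥0∞, IsUpperSet U → μ (ℓ ⁻¹' U) ≤ μ' (ℓ ⁻¹' U)) :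
    ∀ (k : ℕ) (D : Set (Fin k → 𝒳)), MeasurableSet D →
      (∀ x y : Fin k → 𝒳, (∀ i, ℓ (x i) ≤ ℓ (y i)) → x ∈ D → y ∈ D) →
      Measure.pi (fun _ => μ) D ≤ Measure.pi (fun _ => μ') D := by
  intro k
  induction k with
  | zero =>
    intro D hD hup
    rcases eq_empty_or_nonempty D with h | ⟨x, hx⟩
    · simp [h]
    have hDuniv : D = univ := by
      ext y
      simp only [mem_univ, iff_true]
      exact hup x y (fun i => i.elim0) hx
    rw [hDuniv]
    simp
  | succ k ih =>
    intro D hD hup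
    set e := MeasurableEquiv.piFinSuccAbove (fun _ : Fin (k + 1) => 𝒳) 0 with he
    set S : Set (𝒳 × (Fin k → 𝒳)) := e.symm ⁻¹' D with hS
    have hSm : MeasurableSet S := e.symm.measurable hD
    -- coordinates of e.symm
    have hcoord : ∀ (p : 𝒳 × (Fin k → 𝒳)), e.symm p 0 = p.1 ∧ ∀ j : Fin k, e.symm p j.succ = p.2 j := by
      intro p
      constructor
      · simp [he, MeasurableEquiv.piFinSuccAbove]
      · intro j
        simp [he, MeasurableEquiv.piFinSuccAbove, Fin.succAbove_zero]
    have hupS : ∀ (a b : 𝒳) (y z : Fin k → 𝒳), ℓ a ≤ ℓ b → (∀ i, ℓ (y i) ≤ ℓ (z i)) →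
        (a, y) ∈ S → (b, z) ∈ S := by
      intro a b y z hab hyz hmem
      refine hup _ _ ?_ hmem
      intro i
      refine Fin.cases ?_ ?_ i
      · rw [(hcoord (a,y)).1, (hcoord (b,z)).1]; exact hab
      · intro j
        rw [(hcoord (a,y)).2 j, (hcoord (b,z)).2 j]; exact hyz j
    have hpiD : ∀ ν : Measure 𝒳, IsProbabilityMeasure ν →
        Measure.pi (fun _ : Fin (k+1) => ν) D = (ν.prod (Measure.pi fun _ : Fin k => ν)) S := by
      intro ν hν
      have hmp := measurePreserving_piFinSuccAbove (fun _ : Fin (k+1) => ν) 0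
      rw [← hmp.map_eq, MeasurableEquiv.map_apply]
      congr 1
      rw [hS, ← Set.preimage_comp, MeasurableEquiv.symm_comp_self, preimage_id]
    rw [hpiD μ inferInstance, hpiD μ' inferInstance]
    calc (μ.prod (Measure.pi fun _ : Fin k => μ)) S
        = ∫⁻ x, (Measure.pi fun _ : Fin k => μ) (Prod.mk x ⁻¹' S) ∂μ :=
          Measure.prod_apply hSm
      _ ≤ ∫⁻ x, (Measure.pi fun _ : Fin k => μ') (Prod.mk x ⁻¹' S) ∂μ := by
          refine lintegral_mono fun x => ?_
          refine ih (Prod.mk x ⁻¹' S) (measurable_prodMk_left hSm) ?_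
          intro y z hyz hy
          exact hupS x x y z le_rfl hyz hy
      _ = (μ.prod (Measure.pi fun _ : Fin k => μ')) S := (Measure.prod_apply hSm).symm
      _ = ∫⁻ y, μ ((fun x => (x, y)) ⁻¹' S) ∂(Measure.pi fun _ : Fin k => μ') :=
          Measure.prod_apply_symm hSm
      _ ≤ ∫⁻ y, μ' ((fun x => (x, y)) ⁻¹' S) ∂(Measure.pi fun _ : Fin k => μ') := by
          refine lintegral_mono fun y => ?_
          obtain ⟨U, hU, hrepr⟩ := section_repr ℓ (S := (fun x => (x, y)) ⁻¹' S)
            (fun a b hab ha => hupS a b y y hab (fun i => le_rfl) ha)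
          rw [hrepr]
          exact hcomp U hU
      _ = (μ'.prod (Measure.pi fun _ : Fin k => μ')) S := (Measure.prod_apply_symm hSm).symm


lemma image_Icc_fin (k : ℕ) (q p : Fin k) :
    Finset.image (fun i : Fin k => i.val + 1) (Finset.Icc q p)
      = Finset.Icc (q.val + 1) (p.val + 1) := by
  ext a
  simp only [Finset.mem_image, Finset.mem_Icc, Fin.le_def]
  constructor
  · rintro ⟨i, ⟨h1, h2⟩, rfl⟩; omega
  · rintro ⟨h1, h2⟩
    refine ⟨⟨a - 1, by omega⟩, ⟨?_, ?_⟩, ?_⟩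
    · show q.val ≤ a - 1; omega
    · show a - 1 ≤ p.val; omega
    · show a - 1 + 1 = a; omega

lemma prod_transfer (k : ℕ) (q p : Fin k) (f : ℕ → ℝ≥0∞) :
    ∏ i ∈ Finset.Icc q p, f (i.val + 1) = ∏ i ∈ Finset.Icc (q.val + 1) (p.val + 1), f i := by
  rw [← image_Icc_fin k q p, Finset.prod_image]
  intro i _ j _ h
  exact Fin.ext (by simp only at h; omega)

lemma image_univ_fin (k : ℕ) :
    Finset.image (fun i : Fin k => i.val + 1) Finset.univ = Finset.Icc 1 k := by
  ext a
  simp only [Finset.mem_image, Finset.mem_univ, true_and, Finset.mem_Icc]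
  constructor
  · rintro ⟨i, rfl⟩; omega
  · rintro ⟨h1, h2⟩
    exact ⟨⟨a - 1, by omega⟩, show a - 1 + 1 = a by omega⟩

lemma noChangeLaw_prob {Q : Measure (ℕ → 𝒳)} {ν : Measure 𝒳} (h : IsNoChangeLaw Q ν) :
    IsProbabilityMeasure ν := by
  obtain ⟨hQ, hrect⟩ := h
  have h1 := hrect {1} (by simp) (fun _ => univ) (fun _ => MeasurableSet.univ)
  have h2 : {ω : ℕ → 𝒳 | ∀ i ∈ ({1} : Finset ℕ), ω i ∈ (univ : Set 𝒳)} = univ := by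
    ext ω; simp
  rw [h2, measure_univ, Finset.prod_singleton] at h1
  exact ⟨h1.symm⟩

lemma noChangeLaw_map {Q : Measure (ℕ → 𝒳)} {ν : Measure 𝒳} (h : IsNoChangeLaw Q ν) (k : ℕ) :
    Measure.map (fun ω (i : Fin k) => ω (i.val + 1)) Q = Measure.pi (fun _ : Fin k => ν) := by
  haveI := noChangeLaw_prob h
  obtain ⟨hQ, hrect⟩ := h
  have hr : Measurable (fun (ω : ℕ → 𝒳) (i : Fin k) => ω (i.val + 1)) :=
    measurable_pi_lambda _ fun i => measurable_pi_apply _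
  symm
  apply Measure.pi_eq
  intro s hs
  rw [Measure.map_apply hr (MeasurableSet.univ_pi hs)]
  set A : ℕ → Set 𝒳 := fun n => if h : 1 ≤ n ∧ n ≤ k then s ⟨n - 1, by omega⟩ else univ with hA
  have hmeas : ∀ n, MeasurableSet (A n) := by
    intro n
    by_cases hn : 1 ≤ n ∧ n ≤ k
    · rw [hA]; simp only [dif_pos hn]; exact hs _
    · rw [hA]; simp only [dif_neg hn]; exact MeasurableSet.univ
  have hAval : ∀ i : Fin k, A (i.val + 1) = s i := by
    intro i
    have hn : 1 ≤ i.val + 1 ∧ i.val + 1 ≤ k := ⟨by omega, by omega⟩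
    rw [hA]
    simp only [dif_pos hn]
    have he : (⟨i.val + 1 - 1, by omega⟩ : Fin k) = i := Fin.ext (by simp)
    rw [he]
  have hset : (fun (ω : ℕ → 𝒳) (i : Fin k) => ω (i.val + 1)) ⁻¹' (univ.pi s)
      = {ω : ℕ → 𝒳 | ∀ i ∈ Finset.Icc 1 k, ω i ∈ A i} := by
    ext ω
    simp only [mem_preimage, Set.mem_univ_pi, mem_setOf_eq, Finset.mem_Icc]
    constructor
    · intro hω n hn
      have hA' : A n = s ⟨n - 1, by omega⟩ := by rw [hA]; simp only [dif_pos hn]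
      rw [hA']
      have := hω ⟨n - 1, by omega⟩
      simpa [Nat.sub_add_cancel hn.1] using this
    · intro hω i
      have := hω (i.val + 1) ⟨by omega, by omega⟩
      rwa [hAval i] at this
  rw [hset, hrect (Finset.Icc 1 k) (fun i hi => (Finset.mem_Icc.1 hi).1) A hmeas]
  rw [← image_univ_fin k, Finset.prod_image (fun i _ j _ h => Fin.ext (by omega))]
  exact Finset.prod_congr rfl fun i _ => by rw [hAval i]


/-- If `(P₀*, P₁*)` is a least favorable distribution pair in terms of
risk for testing `𝒫₀` vs `𝒫₁` (for every likelihood ratio test between `P₀*` and `P₁*`,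
the risks `R(P_j*, φ) = C_j·P_j*(error)` dominate `R(P_j, φ)` for all `P_j ∈ 𝒫_j`), then
Assumption 1 holds with `F₀* = P₀*` for the CUSUM detector built from the likelihood ratio
of `P₁*` to `P₀*`: `P_{P₀,∞}(τ_cs ≥ t) ≥ P_{P₀*,∞}(τ_cs ≥ t)` for every `P₀ ∈ 𝒫₀` and
`t ∈ ℕ`, hence `inf_{P₀ ∈ 𝒫₀} P_{P₀,∞}(τ_cs ≥ t) ≥ P_{P₀*,∞}(τ_cs ≥ t)`. -/
theorem lfd_pair_implies_assumption_one
    {𝒳 : Type*} [MeasurableSpace 𝒳]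
    (𝒫₀ 𝒫₁ : Set (Measure 𝒳)) (hdisj : Disjoint 𝒫₀ 𝒫₁)
    (μ : Measure 𝒳) [SigmaFinite μ]
    (p₀ p₁ : 𝒳 → ℝ≥0∞) (hp₀ : Measurable p₀) (hp₁ : Measurable p₁)
    (P₀s P₁s : Measure 𝒳) (hP₀s : P₀s ∈ 𝒫₀) (hP₁s : P₁s ∈ 𝒫₁)
    (hd₀ : P₀s = μ.withDensity p₀) (hd₁ : P₁s = μ.withDensity p₁)
    -- the constants appearing in the risks
    (C₀ C₁ : ℝ≥0∞) (hC₀ : 0 < C₀) (hC₀' : C₀ ≠ ⊤) (hC₁ : 0 < C₁) (hC₁' : C₁ ≠ ⊤)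
    -- least favorable distribution pair: for every likelihood ratio test (threshold η),
    -- the risk at (P₀*, P₁*) dominates the risk at every (P₀, P₁) ∈ 𝒫₀ × 𝒫₁
    (hLFD : ∀ η : ℝ≥0∞,
      (∀ P₀ ∈ 𝒫₀, C₀ * P₀ {x | η < p₁ x / p₀ x} ≤ C₀ * P₀s {x | η < p₁ x / p₀ x}) ∧
      (∀ P₁ ∈ 𝒫₁, C₁ * P₁ {x | p₁ x / p₀ x ≤ η} ≤ C₁ * P₁s {x | p₁ x / p₀ x ≤ η}))
    (A : ℝ≥0∞) (hA : 0 < A) :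
    ∀ P₀ ∈ 𝒫₀, ∀ t : ℕ, ∀ Q Qs : Measure (ℕ → 𝒳),
      IsNoChangeLaw Q P₀ → IsNoChangeLaw Qs P₀s →
      Qs {ω | (t : ℕ∞) ≤ cusumTimeE p₀ p₁ A ω} ≤
        Q {ω | (t : ℕ∞) ≤ cusumTimeE p₀ p₁ A ω} := by
  intro P₀ hP₀ t Q Qs hQ hQs
  have hℓ : Measurable (fun x => p₁ x / p₀ x) := hp₁.div hp₀
  set ℓ : 𝒳 → ℝ≥0∞ := fun x => p₁ x / p₀ x with hℓdef
  haveI hP₀p : IsProbabilityMeasure P₀ := noChangeLaw_prob hQ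
  haveI hP₀sp : IsProbabilityMeasure P₀s := noChangeLaw_prob hQs
  have hIoi : ∀ a : ℝ≥0∞, P₀ (ℓ ⁻¹' Ioi a) ≤ P₀s (ℓ ⁻¹' Ioi a) := by
    intro a
    have h := (hLFD a).1 P₀ hP₀
    have h2 : P₀ {x | a < p₁ x / p₀ x} ≤ P₀s {x | a < p₁ x / p₀ x} :=
      (ENNReal.mul_le_mul_iff_right hC₀.ne' hC₀').mp h
    exact h2
  have hcomp : ∀ U : Set ℝ≥0∞, IsUpperSet U → P₀ (ℓ ⁻¹' U) ≤ P₀s (ℓ ⁻¹' U) :=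
    fun U hU => upper_compare ℓ hℓ P₀ P₀s hIoi hU
  haveI := hQ.1
  haveI := hQs.1
  rcases t with _ | k
  · have huniv : {ω : ℕ → 𝒳 | ((0 : ℕ) : ℕ∞) ≤ cusumTimeE p₀ p₁ A ω} = univ := by
      ext ω; simp
    rw [huniv, measure_univ, measure_univ]
  · set r : (ℕ → 𝒳) → Fin k → 𝒳 := fun ω i => ω (i.val + 1) with hrdef
    have hrm : Measurable r := measurable_pi_lambda _ fun i => measurable_pi_apply _
    set D : Set (Fin k → 𝒳) :=
      {x | ∃ p q : Fin k, q ≤ p ∧ A ≤ ∏ i ∈ Finset.Icc q p, ℓ (x i)} with hDdef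
    have hDmeas : MeasurableSet D := by
      have hre : D = ⋃ (p : Fin k), ⋃ (q : Fin k),
          {x : Fin k → 𝒳 | q ≤ p ∧ A ≤ ∏ i ∈ Finset.Icc q p, ℓ (x i)} := by
        ext x
        simp only [hDdef, mem_iUnion, mem_setOf_eq]
      rw [hre]
      refine MeasurableSet.iUnion fun p => MeasurableSet.iUnion fun q => ?_
      by_cases hqp : q ≤ p
      · have he : {x : Fin k → 𝒳 | q ≤ p ∧ A ≤ ∏ i ∈ Finset.Icc q p, ℓ (x i)}
            = {x : Fin k → 𝒳 | A ≤ ∏ i ∈ Finset.Icc q p, ℓ (x i)} := by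
          ext x; simp [hqp]
        rw [he]
        exact measurableSet_le measurable_const
          (Finset.measurable_prod _ fun i _ => hℓ.comp (measurable_pi_apply i))
      · have he : {x : Fin k → 𝒳 | q ≤ p ∧ A ≤ ∏ i ∈ Finset.Icc q p, ℓ (x i)} = ∅ := by
          ext x; simp [hqp]
        rw [he]; exact MeasurableSet.empty
    have hDup : ∀ x y : Fin k → 𝒳, (∀ i, ℓ (x i) ≤ ℓ (y i)) → x ∈ D → y ∈ D := by
      rintro x y hxy ⟨p, q, hqp, hA'⟩
      exact ⟨p, q, hqp, hA'.trans (Finset.prod_le_prod' fun i _ => hxy i)⟩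
    have hkey : ∀ ω : ℕ → 𝒳,
        (((k + 1 : ℕ) : ℕ∞) ≤ cusumTimeE p₀ p₁ A ω ↔ ω ∉ r ⁻¹' D) := by
      intro ω
      rw [cusumTimeE, le_sInf_iff]
      constructor
      · intro h hmem
        obtain ⟨p, q, hqp, hA'⟩ := hmem
        have hprod : A ≤ ∏ i ∈ Finset.Icc (q.val + 1) (p.val + 1), p₁ (ω i) / p₀ (ω i) := by
          rw [← prod_transfer k q p (fun n => p₁ (ω n) / p₀ (ω n))]
          exact hA'
        have h2 := h ((p.val + 1 : ℕ) : ℕ∞)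
          ⟨p.val + 1, by omega, rfl, q.val + 1, by omega, by
            have := hqp; rw [Fin.le_def] at this; omega, hprod⟩
        have h3 : (k + 1 : ℕ) ≤ p.val + 1 := by exact_mod_cast h2
        have := p.isLt
        omega
      · rintro h n ⟨m, hm1, rfl, j, hj1, hjm, hAle⟩
        rw [Nat.cast_le]
        by_contra hlt
        push_neg at hlt
        apply h
        have hm : m - 1 < k := by omega
        have hj : j - 1 < k := by omega
        refine ⟨⟨m - 1, hm⟩, ⟨j - 1, hj⟩, ?_, ?_⟩
        · rw [Fin.le_def]; show j - 1 ≤ m - 1; omega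
        · have e1 : (⟨j - 1, hj⟩ : Fin k).val + 1 = j := by simp; omega
          have e2 : (⟨m - 1, hm⟩ : Fin k).val + 1 = m := by simp; omega
          rw [prod_transfer k ⟨j - 1, hj⟩ ⟨m - 1, hm⟩ (fun n => ℓ (ω n)), e1, e2]
          exact hAle
    have hsets : {ω : ℕ → 𝒳 | ((k + 1 : ℕ) : ℕ∞) ≤ cusumTimeE p₀ p₁ A ω} = (r ⁻¹' D)ᶜ := by
      ext ω
      exact hkey ω
    have hQD : Q (r ⁻¹' D) = Measure.pi (fun _ : Fin k => P₀) D := by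
      rw [← Measure.map_apply hrm hDmeas, noChangeLaw_map hQ k]
    have hQsD : Qs (r ⁻¹' D) = Measure.pi (fun _ : Fin k => P₀s) D := by
      rw [← Measure.map_apply hrm hDmeas, noChangeLaw_map hQs k]
    haveI := hQ.1
    haveI := hQs.1
    rw [hsets, measure_compl (hrm hDmeas) (measure_ne_top _ _),
      measure_compl (hrm hDmeas) (measure_ne_top _ _), measure_univ, measure_univ]
    refine tsub_le_tsub_left ?_ 1
    rw [hQD, hQsD]
    exact pi_compare ℓ hℓ P₀ P₀s hcomp k D hDmeas hDup


end SeqChange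
end

section
/- Adaptive confidence set for known pre- and post-change distributions: for any fixed α ∈ (0,1), any B, N, T ∈ ℕ, any L ∈ ℕ ∪ {∞}, and any change detection stopping time τ with P_{F₀,∞}(τ ≥ T) > 0, the confidence set C₁ := {t ∈ ℕ : t ≤ τ, M_t ≤ Quantile(1 − α r_t; M_t, M_{t,L}¹,…,M_{t,L}^B)}, constructed with any family (r_t) of almost surely strictly positive random variables, each independent of the observed data and of the simulations, satisfying E[r_t] = P_{F₀,∞}(τ ≥ t), satisfies P_{F₀,T,F₁}(T ∈ C₁ | τ ≥ T) ≥ 1 − α. -/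
open MeasureTheory ProbabilityTheory Filter Set
open scoped ENNReal NNReal

namespace SeqChange

variable {𝒳 : Type*} [MeasurableSpace 𝒳]

/-- `Quantile(1 − c; v)`: the `⌈(1 − c)·|v|⌉`-th smallest of the values in `v`. -/
noncomputable def quantileStat (c : ℝ) (v : Multiset EReal) : EReal :=
  (v.sort (· ≤ ·)).getD (⌈(1 - c) * (v.card : ℝ)⌉₊ - 1) ⊥

/-- Membership in the stopped confidence sequence `CS(X_t, …, X_τ; 1 − c)`:
`θ ∈ CS(X_t,…,X_n; 1−c)` whenever `τ = n` (vacuously true when `τ = ∞`). -/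
def stoppedCSMem {𝒳 : Type*} [MeasurableSpace 𝒳] {Θ : Type*} (τ : (ℕ → 𝒳) → ℕ∞)
    (CSset : ℝ → ℕ → ℕ → (ℕ → 𝒳) → Set Θ) (c : ℝ) (t : ℕ) (ω : ℕ → 𝒳) (θ : Θ) : Prop :=
  ∀ n : ℕ, t ≤ n → τ ω = (n : ℕ∞) → θ ∈ CSset c t n ω

/-- The `(B+1)`-tuple `(M_t, M_{t,∞}¹, …, M_{t,∞}^B)` viewed as functions on the product
of the data space and the simulation space. -/
def simTuple {𝒳 Ωs : Type*} (B : ℕ) (M : (ℕ → 𝒳) → EReal) (Minf : Fin B → Ωs → EReal) :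
    Fin (B + 1) → ((ℕ → 𝒳) × Ωs) → EReal :=
  Fin.cases (fun q => M q.1) (fun j q => Minf j q.2)

section AuxLemmas

/-! ### Auxiliary lemmas for the proof of Statement 8 -/

private lemma sorted_getD_lt_iff_aux {l : List EReal} (hl : l.Pairwise (· ≤ ·)) {i : ℕ}
    (hi : i < l.length) (m : EReal) :
    l.getD i ⊥ < m ↔ i + 1 ≤ l.countP (fun x => decide (x < m)) := by
  rw [List.getD_eq_getElem l ⊥ hi]
  constructor
  · intro h
    have hsplit : l = l.take (i+1) ++ l.drop (i+1) := (List.take_append_drop _ _).symm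
    have hlen : (l.take (i+1)).length = i + 1 := by
      rw [List.length_take]; omega
    have hall : ∀ a ∈ l.take (i+1), (decide (a < m)) = true := by
      intro a ha
      obtain ⟨j, hj, rfl⟩ := List.mem_iff_getElem.1 ha
      rw [List.getElem_take]
      have hji : j ≤ i := by omega
      have : l.get ⟨j, by omega⟩ ≤ l.get ⟨i, hi⟩ :=
        hl.rel_get_of_le (by simpa using hji)
      simp only [List.get_eq_getElem] at this
      simp only [decide_eq_true_eq]
      exact lt_of_le_of_lt this h
    calc i + 1 = (l.take (i+1)).countP (fun x => decide (x < m)) := by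
          rw [List.countP_eq_length.2 hall, hlen]
      _ ≤ l.countP (fun x => decide (x < m)) := by
          conv_rhs => rw [hsplit]
          rw [List.countP_append]; omega
  · intro h
    by_contra hc
    push_neg at hc
    have hdrop : (l.drop i).countP (fun x => decide (x < m)) = 0 := by
      rw [List.countP_eq_zero]
      intro a ha
      obtain ⟨j, hj, rfl⟩ := List.mem_iff_getElem.1 ha
      rw [List.getElem_drop]
      have hlen2 : i + j < l.length := by
        have : (l.drop i).length = l.length - i := List.length_drop; omega
      have : l.get ⟨i, hi⟩ ≤ l.get ⟨i + j, hlen2⟩ :=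
        hl.rel_get_of_le (by simp)
      simp only [List.get_eq_getElem] at this
      simp only [decide_eq_true_eq, not_lt]
      exact le_trans hc this
    have hsplit : l = l.take i ++ l.drop i := (List.take_append_drop _ _).symm
    have : l.countP (fun x => decide (x < m)) ≤ i := by
      conv_lhs => rw [hsplit]
      rw [List.countP_append, hdrop]
      have := List.countP_le_length (l := l.take i) (p := fun x => decide (x < m))
      rw [List.length_take] at this
      omega
    omega

private lemma quantileStat_lt_iff_aux {c : ℝ} {v : Multiset EReal}
    (hv : ⌈(1 - c) * (v.card : ℝ)⌉₊ - 1 < Multiset.card v) (m : EReal) :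
    quantileStat c v < m ↔
      (⌈(1 - c) * (v.card : ℝ)⌉₊ - 1) + 1 ≤ Multiset.countP (fun x => x < m) v := by
  have hl : (v.sort (· ≤ ·)).Pairwise (· ≤ ·) := Multiset.pairwise_sort (s := v) (r := (· ≤ ·))
  have hlen : (v.sort (· ≤ ·)).length = Multiset.card v := Multiset.length_sort _
  have hcnt : Multiset.countP (fun x => x < m) v
      = (v.sort (· ≤ ·)).countP (fun x => decide (x < m)) := by
    conv_lhs => rw [← Multiset.sort_eq (s := v) (r := (· ≤ ·))]
    rfl
  rw [quantileStat, hcnt]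
  exact sorted_getD_lt_iff_aux hl (by omega) m

private lemma card_many_below_le_aux {n : ℕ} (y : Fin n → EReal) (k : ℕ) :
    (Finset.univ.filter fun j => k ≤ (Finset.univ.filter fun i => y i < y j).card).card
      ≤ n - k := by
  classical
  set S := Finset.univ.filter fun j => k ≤ (Finset.univ.filter fun i => y i < y j).card with hS
  rcases S.eq_empty_or_nonempty with he | hne
  · simp [he]
  · obtain ⟨j₀, hj₀, hmin⟩ := S.exists_min_image y hne
    have hk : k ≤ (Finset.univ.filter fun i => y i < y j₀).card :=
      (Finset.mem_filter.1 hj₀).2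
    have hsub : (Finset.univ.filter fun i => y i < y j₀) ⊆ Finset.univ \ S := by
      intro i hi
      have hlt : y i < y j₀ := (Finset.mem_filter.1 hi).2
      refine Finset.mem_sdiff.2 ⟨Finset.mem_univ _, fun hiS => ?_⟩
      exact absurd (hmin i hiS) (not_le.2 hlt)
    have h1 : k ≤ n - S.card := by
      calc k ≤ (Finset.univ.filter fun i => y i < y j₀).card := hk
        _ ≤ (Finset.univ \ S).card := Finset.card_le_card hsub
        _ = n - S.card := by rw [Finset.card_sdiff_of_subset (Finset.subset_univ _)]; simp
    have h2 : S.card ≤ n := by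
      simpa using Finset.card_le_card (Finset.subset_univ S)
    omega

private lemma pi_map_perm_aux {n : ℕ} (m : Measure EReal) [IsProbabilityMeasure m]
    (σ : Equiv.Perm (Fin n)) :
    (Measure.pi fun _ : Fin n => m).map (fun y i => y (σ i)) = Measure.pi fun _ => m := by
  have hg : Measurable (fun y : Fin n → EReal => fun i => y (σ i)) :=
    measurable_pi_lambda _ fun i => measurable_pi_apply (σ i)
  refine (Measure.pi_eq (μ := fun _ => m) fun s hs => ?_).symm
  rw [Measure.map_apply hg (MeasurableSet.univ_pi hs)]
  have hpre : (fun y : Fin n → EReal => fun i => y (σ i)) ⁻¹' (Set.univ.pi s)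
      = Set.univ.pi (fun j => s (σ.symm j)) := by
    ext y
    simp only [Set.mem_preimage, Set.mem_pi, Set.mem_univ, forall_true_left]
    constructor
    · intro h j; simpa using h (σ.symm j)
    · intro h i; simpa using h (σ i)
  rw [hpre, Measure.pi_pi]
  exact Equiv.prod_comp σ.symm (fun i => m (s i))

private lemma aem_vec_aux {Ω : Type*} [MeasurableSpace Ω] {ν : Measure Ω}
    {n : ℕ} {Y : Fin n → Ω → EReal} (hY : ∀ i, AEMeasurable (Y i) ν) :
    AEMeasurable (fun q (i : Fin n) => Y i q) ν := by
  refine ⟨fun q i => (hY i).mk _ q, measurable_pi_lambda _ fun i => (hY i).measurable_mk, ?_⟩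
  have h : ∀ᵐ q ∂ν, ∀ i, Y i q = (hY i).mk _ q :=
    (MeasureTheory.ae_all_iff).2 fun i => (hY i).ae_eq_mk
  filter_upwards [h] with q hq
  funext i; exact hq i

private lemma map_tuple_eq_pi_aux {Ω : Type*} [MeasurableSpace Ω] {ν : Measure Ω}
    [IsProbabilityMeasure ν]
    {n : ℕ} {Y : Fin (n+1) → Ω → EReal} (hY : ∀ i, AEMeasurable (Y i) ν)
    (hindep : iIndepFun Y ν)
    (hid : ∀ i, ν.map (Y i) = ν.map (Y 0)) :
    ν.map (fun q i => Y i q) = Measure.pi (fun _ => ν.map (Y 0)) := by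
  haveI : IsProbabilityMeasure (ν.map (Y 0)) := Measure.isProbabilityMeasure_map (hY 0)
  have hvec := aem_vec_aux hY
  refine (Measure.pi_eq (μ := fun _ => ν.map (Y 0)) fun s hs => ?_).symm
  rw [Measure.map_apply_of_aemeasurable hvec (MeasurableSet.univ_pi hs)]
  have hpre : (fun q (i : Fin (n+1)) => Y i q) ⁻¹' (Set.univ.pi s) = ⋂ i, Y i ⁻¹' s i := by
    ext q; simp [Set.mem_pi]
  rw [hpre]
  have := hindep.measure_inter_preimage_eq_mul (Finset.univ) (sets := s)
    (fun i _ => hs i)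
  simp only [Finset.mem_univ, Set.iInter_true, Finset.prod_congr] at this
  rw [this]
  refine Finset.prod_congr rfl fun i _ => ?_
  rw [← Measure.map_apply_of_aemeasurable (hY i) (hs i), hid i]

private lemma conformal_count_bound_aux {Ω : Type*} [MeasurableSpace Ω] {ν : Measure Ω}
    [IsProbabilityMeasure ν]
    {n : ℕ} {Y : Fin (n+1) → Ω → EReal}
    (hindep : iIndepFun Y ν)
    (hid : ∀ i, IdentDistrib (Y i) (Y 0) ν ν) (k : ℕ) :
    ν {q | k ≤ (Finset.univ.filter fun i => Y i q < Y 0 q).card}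
      ≤ (((n+1) - k : ℕ) : ℝ≥0∞) / ((n+1 : ℕ) : ℝ≥0∞) := by
  classical
  have hY : ∀ i, AEMeasurable (Y i) ν := fun i => (hid i).aemeasurable_fst
  have hidm : ∀ i, ν.map (Y i) = ν.map (Y 0) := fun i => (hid i).map_eq
  haveI : IsProbabilityMeasure (ν.map (Y 0)) := Measure.isProbabilityMeasure_map (hY 0)
  set m := ν.map (Y 0) with hm
  have hvec := aem_vec_aux hY
  set A : Fin (n+1) → Set (Fin (n+1) → EReal) :=
    fun j => {y | k ≤ (Finset.univ.filter fun i => y i < y j).card} with hA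
  have hcntmeas : ∀ j : Fin (n+1),
      Measurable (fun y : Fin (n+1) → EReal =>
        (Finset.univ.filter fun i => y i < y j).card) := by
    intro j
    have : (fun y : Fin (n+1) → EReal => (Finset.univ.filter fun i => y i < y j).card)
        = fun y => ∑ i : Fin (n+1), if y i < y j then 1 else 0 := by
      funext y; exact Finset.card_filter _ _
    rw [this]
    exact Finset.measurable_sum _ fun i _ =>
      Measurable.ite (measurableSet_lt (measurable_pi_apply i) (measurable_pi_apply j))
        measurable_const measurable_const
  have hAmeas : ∀ j, MeasurableSet (A j) := fun j => (hcntmeas j) measurableSet_Ici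
  set E : Fin (n+1) → Set Ω := fun j => (fun q (i : Fin (n+1)) => Y i q) ⁻¹' A j with hE
  have hEnull : ∀ j, NullMeasurableSet (E j) ν := fun j => hvec.nullMeasurable (hAmeas j)
  have key : ∀ j, ν (E j) = ν (E 0) := by
    intro j
    have hmapA : ∀ j', ν (E j') = Measure.pi (fun _ : Fin (n+1) => m) (A j') := by
      intro j'
      rw [hE, ← Measure.map_apply_of_aemeasurable hvec (hAmeas j'),
        map_tuple_eq_pi_aux hY hindep hidm]
    rw [hmapA j, hmapA 0]
    set σ := Equiv.swap (0 : Fin (n+1)) j with hσ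
    have hg : Measurable (fun y : Fin (n+1) → EReal => fun i => y (σ i)) :=
      measurable_pi_lambda _ fun i => measurable_pi_apply (σ i)
    have hswap : A j = (fun y : Fin (n+1) → EReal => fun i => y (σ i)) ⁻¹' A 0 := by
      ext y
      simp only [hA, Set.mem_preimage, Set.mem_setOf_eq]
      have h0 : σ 0 = j := Equiv.swap_apply_left 0 j
      simp only [h0]
      have hcard : (Finset.univ.filter fun i => y (σ i) < y j).card
          = (Finset.univ.filter fun i => y i < y j).card := by
        rw [Finset.card_filter, Finset.card_filter]
        exact Equiv.sum_comp σ (fun i => if y i < y j then 1 else 0)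
      rw [hcard]
    rw [hswap, ← Measure.map_apply hg (hAmeas 0), pi_map_perm_aux m σ]
  have haeind : ∀ j, AEMeasurable ((E j).indicator (1 : Ω → ℝ≥0∞)) ν := by
    intro j
    have htme : MeasureTheory.toMeasurable ν (E j) =ᵐ[ν] E j :=
      (hEnull j).toMeasurable_ae_eq
    have hmem := Filter.eventuallyEq_set.mp htme
    refine (measurable_one.indicator (measurableSet_toMeasurable ν (E j))).aemeasurable.congr ?_
    filter_upwards [hmem] with q hq
    by_cases h : q ∈ E j
    · simp [Set.indicator_apply, h, hq.mpr h]
    · have : q ∉ MeasureTheory.toMeasurable ν (E j) := fun hc => h (hq.mp hc)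
      simp [Set.indicator_apply, h, this]
  have hsum : ((n+1 : ℕ) : ℝ≥0∞) * ν (E 0) ≤ (((n+1) - k : ℕ) : ℝ≥0∞) := by
    have h1 : ((n+1 : ℕ) : ℝ≥0∞) * ν (E 0) = ∑ j : Fin (n+1), ν (E j) := by
      rw [Finset.sum_congr rfl fun j _ => key j, Finset.sum_const]
      simp [mul_comm]
    rw [h1]
    have h2 : ∀ j, ν (E j) = ∫⁻ q, (E j).indicator (1 : Ω → ℝ≥0∞) q ∂ν := by
      intro j
      rw [lintegral_indicator_one₀ (hEnull j)]
    calc ∑ j : Fin (n+1), ν (E j)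
        = ∑ j : Fin (n+1), ∫⁻ q, (E j).indicator (1 : Ω → ℝ≥0∞) q ∂ν :=
          Finset.sum_congr rfl fun j _ => h2 j
      _ = ∫⁻ q, ∑ j : Fin (n+1), (E j).indicator (1 : Ω → ℝ≥0∞) q ∂ν :=
          (lintegral_finset_sum' _ fun j _ => haeind j).symm
      _ ≤ ∫⁻ _, (((n+1) - k : ℕ) : ℝ≥0∞) ∂ν := by
          refine lintegral_mono fun q => ?_
          have hpt : ∑ j : Fin (n+1), (E j).indicator (1 : Ω → ℝ≥0∞) q
              = ((Finset.univ.filter fun j : Fin (n+1) => q ∈ E j).card : ℝ≥0∞) := by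
            rw [Finset.card_filter]
            push_cast
            refine Finset.sum_congr rfl fun j _ => ?_
            by_cases hq : q ∈ E j <;> simp [Set.indicator_apply, hq]
          rw [hpt]
          have := card_many_below_le_aux (fun i => Y i q) k
          have hmem : (Finset.univ.filter fun j : Fin (n+1) => q ∈ E j)
              = (Finset.univ.filter fun j => k ≤
                  (Finset.univ.filter fun i => Y i q < Y j q).card) := by
            refine Finset.filter_congr fun j _ => ?_
            rfl
          rw [hmem]
          exact (Nat.cast_le (α := ℝ≥0∞)).2 this
      _ = (((n+1) - k : ℕ) : ℝ≥0∞) := by simp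
  have hE0 : {q | k ≤ (Finset.univ.filter fun i => Y i q < Y 0 q).card} = E 0 := rfl
  rw [hE0, ENNReal.le_div_iff_mul_le (Or.inl (by exact_mod_cast Nat.succ_ne_zero n))
    (Or.inl (ENNReal.natCast_ne_top _)), mul_comm]
  exact hsum

private lemma div_bound_aux {n : ℕ} (hn : 1 ≤ n) {c : ℝ} (hc : 0 < c) :
    ((n - ((⌈(1-c)*(n:ℝ)⌉₊ - 1) + 1) : ℕ) : ℝ≥0∞) / (n : ℝ≥0∞) ≤ ENNReal.ofReal c := by
  set u := ⌈(1-c)*(n:ℝ)⌉₊ with hu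
  set k := (u - 1) + 1 with hk
  have hreal : ((n - k : ℕ) : ℝ) ≤ c * n := by
    rcases Nat.eq_zero_or_pos u with h0 | hpos
    · have h1 : (1-c)*(n:ℝ) ≤ 0 := by
        by_contra hcon
        push_neg at hcon
        have := Nat.ceil_pos.2 hcon
        omega
      have hk1 : k = 1 := by omega
      rw [hk1, Nat.cast_sub hn]
      have hn' : (1:ℝ) ≤ n := by exact_mod_cast hn
      nlinarith
    · have hku : k = u := by omega
      rcases le_or_gt n k with hnk | hkn
      · rw [Nat.sub_eq_zero_of_le hnk]
        have hn' : (0:ℝ) ≤ n := Nat.cast_nonneg n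
        simpa using mul_nonneg hc.le hn'
      · have hceil : (1-c)*(n:ℝ) ≤ u := Nat.le_ceil _
        rw [Nat.cast_sub hkn.le]
        have : (k:ℝ) = u := by exact_mod_cast congrArg Nat.cast hku
        nlinarith
  rw [ENNReal.div_le_iff (by exact_mod_cast (by omega : n ≠ 0) : (n:ℝ≥0∞) ≠ 0)
    (ENNReal.natCast_ne_top n)]
  calc ((n - k : ℕ) : ℝ≥0∞) = ENNReal.ofReal ((n - k : ℕ) : ℝ) := by
        rw [ENNReal.ofReal_natCast]
    _ ≤ ENNReal.ofReal (c * n) := ENNReal.ofReal_le_ofReal hreal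
    _ = ENNReal.ofReal c * (n : ℝ≥0∞) := by
        rw [ENNReal.ofReal_mul hc.le, ENNReal.ofReal_natCast]

private lemma enat_le_iff_sub_lt {m : ℕ∞} {T : ℕ} (hT : 1 ≤ T) :
    (T : ℕ∞) ≤ m ↔ ((T-1 : ℕ) : ℕ∞) < m := by
  induction m using ENat.recTopCoe with
  | top => exact iff_of_true le_top (WithTop.coe_lt_top (T-1))
  | coe a =>
    rw [Nat.cast_le, Nat.cast_lt]
    omega

end AuxLemmas


/-- Adaptive confidence set for known pre- and post-change distributions
(possibly with dependent data): with
`C₁ := {t ≤ τ : M_t ≤ Quantile(1 − α r_t; M_t, M_{t,L}¹, …, M_{t,L}^B)}`,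
for any `α ∈ (0,1)`, any `B, T`, any truncation level `L` (encoded through the
hypothesis `M_{t,∞}^j ≤ M_{t,L}^j`), and any detection stopping time `τ` with
`P_{F₀,∞}(τ ≥ T) > 0`, one has `P_{F₀,T,F₁}(T ∈ C₁ | τ ≥ T) ≥ 1 − α`. -/
theorem adaptive_known_coverage
    {𝒳 : Type*} [MeasurableSpace 𝒳]
    (τ : (ℕ → 𝒳) → ℕ∞) (hτ : IsStoppingTimeSeq τ)
    -- `P t` is the joint law `P_{F₀,t,F₁}` (change at time `t`; dependence is allowed),
    -- `Pinf` is the joint law `P_{F₀,∞}` with no change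
    (P : ℕ → Measure (ℕ → 𝒳)) (Pinf : Measure (ℕ → 𝒳))
    (hPprob : ∀ t, IsProbabilityMeasure (P t)) (hPinfprob : IsProbabilityMeasure Pinf)
    -- the pre-change segment `X₁, …, X_{t-1}` has the same joint law under `P t` and `Pinf`
    (hagree : ∀ t : ℕ, 1 ≤ t → ∀ s : Set (ℕ → 𝒳),
      MeasurableSet[natFilt 𝒳 (t - 1)] s → P t s = Pinf s)
    -- the observed statistic, with the convention `M_t = -∞` when `t > τ` or `τ = ∞`
    (M : ℕ → (ℕ → 𝒳) → EReal) (hMmeas : ∀ t, Measurable (M t))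
    (hMbot : ∀ (t : ℕ) (ω : ℕ → 𝒳), ¬ ((t : ℕ∞) ≤ τ ω ∧ τ ω ≠ ⊤) → M t ω = ⊥)
    (B : ℕ)
    -- the simulation space, carrying the B simulated (truncated and untruncated) statistics
    {Ωs : Type*} [MeasurableSpace Ωs] (μs : Measure Ωs) [IsProbabilityMeasure μs]
    (ML Minf : ℕ → Fin B → Ωs → EReal)
    (hMLmeas : ∀ t j, Measurable (ML t j))
    (hLB : ∀ t j w, Minf t j w ≤ ML t j w)
    -- for each fixed t, under `P_{F₀,t,F₁}` the tuple `(M_t, M_{t,∞}¹, …, M_{t,∞}^B)`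
    -- is i.i.d. (it is independent of `r_t` by the product construction)
    (hiid : ∀ t : ℕ, 1 ≤ t →
      iIndepFun (simTuple B (M t) (Minf t)) ((P t).prod μs) ∧
      ∀ i : Fin (B + 1),
        IdentDistrib (simTuple B (M t) (Minf t) i) (simTuple B (M t) (Minf t) 0)
          ((P t).prod μs) ((P t).prod μs))
    -- the auxiliary randomization carrying the estimators `r_t`
    {Ωr : Type*} [MeasurableSpace Ωr] (μr : Measure Ωr) [IsProbabilityMeasure μr]
    (r : ℕ → Ωr → ℝ) (hrmeas : ∀ t, Measurable (r t))
    (hrpos : ∀ t, ∀ᵐ a ∂μr, 0 < r t a) (hrint : ∀ t, Integrable (r t) μr)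
    (hrunb : ∀ t : ℕ, ∫ a, r t a ∂μr = (Pinf {ω | (t : ℕ∞) ≤ τ ω}).toReal)
    (α : ℝ) (hα : α ∈ Set.Ioo (0 : ℝ) 1)
    (T : ℕ) (hT : 1 ≤ T)
    (hpos : Pinf {ω | (T : ℕ∞) ≤ τ ω} ≠ 0) :
    ENNReal.ofReal (1 - α) ≤
      ProbabilityTheory.cond ((P T).prod (μs.prod μr))
        {q : (ℕ → 𝒳) × (Ωs × Ωr) | (T : ℕ∞) ≤ τ q.1}
        {q : (ℕ → 𝒳) × (Ωs × Ωr) |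
          T ∈ {t : ℕ | 1 ≤ t ∧ (t : ℕ∞) ≤ τ q.1 ∧
            M t q.1 ≤ quantileStat (α * r t q.2.2)
              ((M t q.1) ::ₘ
                Multiset.map (fun j => ML t j q.2.1) (Finset.univ : Finset (Fin B)).val)}} := by
  classical
  obtain ⟨hα0, hα1⟩ := hα
  haveI := hPprob T
  haveI := hPinfprob
  set ν : Measure ((ℕ → 𝒳) × Ωs) := (P T).prod μs with hνdef
  set μ : Measure ((ℕ → 𝒳) × (Ωs × Ωr)) := (P T).prod (μs.prod μr) with hμdef
  haveI : IsProbabilityMeasure ν := by rw [hνdef]; infer_instance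
  haveI : IsProbabilityMeasure μ := by rw [hμdef]; infer_instance
  set Y : Fin (B+1) → ((ℕ → 𝒳) × Ωs) → EReal := simTuple B (M T) (Minf T) with hYdef
  obtain ⟨hindep, hid⟩ := hiid T hT
  have hYaem : ∀ i, AEMeasurable (Y i) ν := fun i => (hid i).aemeasurable_fst
  set Y' : Fin (B+1) → ((ℕ → 𝒳) × Ωs) → EReal := fun i => (hYaem i).mk _ with hY'def
  have hY'meas : ∀ i, Measurable (Y' i) := fun i => (hYaem i).measurable_mk
  have haeY : ∀ᵐ pq ∂ν, ∀ i, Y i pq = Y' i pq :=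
    (MeasureTheory.ae_all_iff).2 fun i => (hYaem i).ae_eq_mk
  set N : ((ℕ → 𝒳) × Ωs) → ℕ :=
    fun pq => (Finset.univ.filter fun i => Y i pq < Y 0 pq).card with hNdef
  set N' : ((ℕ → 𝒳) × Ωs) → ℕ :=
    fun pq => (Finset.univ.filter fun i => Y' i pq < Y' 0 pq).card with hN'def
  have hN'meas : Measurable N' := by
    have he : N' = fun pq => ∑ i : Fin (B+1), if Y' i pq < Y' 0 pq then 1 else 0 := by
      funext pq; exact Finset.card_filter _ _
    rw [he]
    exact Finset.measurable_sum _ fun i _ =>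
      Measurable.ite (measurableSet_lt (hY'meas i) (hY'meas 0))
        measurable_const measurable_const
  set K : ℝ → ℕ := fun u => (⌈(1 - u) * ((B+1 : ℕ) : ℝ)⌉₊ - 1) + 1 with hKdef
  have hKmeas : Measurable K := by
    have h1 : Measurable fun u : ℝ => (1 - u) * ((B+1 : ℕ) : ℝ) :=
      (measurable_const.sub measurable_id).mul measurable_const
    exact (measurable_from_top (f := fun k : ℕ => (k - 1) + 1)).comp
      (Nat.measurable_ceil.comp h1)
  -- the conditioning event
  set sx : Set (ℕ → 𝒳) := {x | (T : ℕ∞) ≤ τ x} with hsxdef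
  have hsxF : MeasurableSet[natFilt 𝒳 (T-1)] sx := by
    have hcpl : sx = {x | τ x ≤ ((T-1 : ℕ) : ℕ∞)}ᶜ := by
      ext x
      simp only [hsxdef, Set.mem_setOf_eq, Set.mem_compl_iff, not_le]
      exact enat_le_iff_sub_lt hT
    rw [hcpl]
    exact (hτ (T-1)).compl
  have hnatle : natFilt 𝒳 (T-1) ≤ (inferInstance : MeasurableSpace (ℕ → 𝒳)) := by
    refine iSup_le fun i => iSup_le fun _ => ?_
    exact (measurable_pi_apply i).comap_le
  have hsxm : MeasurableSet sx := hnatle _ hsxF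
  set S : Set ((ℕ → 𝒳) × (Ωs × Ωr)) := {q | (T : ℕ∞) ≤ τ q.1} with hSdef
  have hSm : MeasurableSet S := hsxm.preimage measurable_fst
  set p : ℝ≥0∞ := Pinf sx with hpdef
  have hpne : p ≠ 0 := hpos
  have hptop : p ≠ ⊤ := measure_ne_top _ _
  have hμS : μ S = p := by
    have h1 : S = sx ×ˢ (Set.univ : Set (Ωs × Ωr)) := by
      ext q; simp [hSdef, hsxdef, Set.mem_prod]
    rw [h1, hμdef, Measure.prod_prod, measure_univ, mul_one, hpdef]
    exact hagree T hT sx hsxF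
  -- the marginal projection
  set g : ((ℕ → 𝒳) × (Ωs × Ωr)) → ((ℕ → 𝒳) × Ωs) := fun q => (q.1, q.2.1) with hgdef
  have hgmeas : Measurable g := measurable_fst.prodMk (measurable_fst.comp measurable_snd)
  have hgmp : MeasurePreserving g μ ν := by
    refine ⟨hgmeas, ?_⟩
    rw [hνdef]
    refine (Measure.prod_eq fun s t hs ht => ?_).symm
    rw [Measure.map_apply hgmeas (hs.prod ht)]
    have hpre : g ⁻¹' (s ×ˢ t) = s ×ˢ (t ×ˢ (Set.univ : Set Ωr)) := by
      ext q; simp [hgdef, Set.mem_prod]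
    rw [hpre, hμdef, Measure.prod_prod, Measure.prod_prod, measure_univ, mul_one]
  set D0 : Set ((ℕ → 𝒳) × Ωs) := {pq | ¬ ∀ i, Y i pq = Y' i pq} with hD0def
  have hD0 : ν D0 = 0 := (MeasureTheory.ae_iff).1 haeY
  have hgD0 : μ (g ⁻¹' D0) = 0 := by
    rw [hgmp.measure_preimage (NullMeasurableSet.of_null hD0)]
    exact hD0
  -- the bad event
  set E2 : Set (((ℕ → 𝒳) × Ωs) × Ωr) := {z | K (α * r T z.2) ≤ N' z.1} with hE2def
  have hE2meas : MeasurableSet E2 := by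
    have hf1 : Measurable fun z : ((ℕ → 𝒳) × Ωs) × Ωr => K (α * r T z.2) :=
      hKmeas.comp (measurable_const.mul ((hrmeas T).comp measurable_snd))
    have hf2 : Measurable fun z : ((ℕ → 𝒳) × Ωs) × Ωr => N' z.1 :=
      hN'meas.comp measurable_fst
    have hdec : E2 = ⋃ k : ℕ, ((fun z : ((ℕ → 𝒳) × Ωs) × Ωr => K (α * r T z.2)) ⁻¹' {k})
        ∩ ((fun z : ((ℕ → 𝒳) × Ωs) × Ωr => N' z.1) ⁻¹' Set.Ici k) := by
      ext z
      simp only [hE2def, Set.mem_setOf_eq, Set.mem_iUnion, Set.mem_inter_iff,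
        Set.mem_preimage, Set.mem_singleton_iff, Set.mem_Ici]
      exact ⟨fun h => ⟨_, rfl, h⟩, fun ⟨k, hk, h⟩ => hk ▸ h⟩
    rw [hdec]
    exact MeasurableSet.iUnion fun k =>
      (hf1 (measurableSet_singleton k)).inter (hf2 measurableSet_Ici)
  set Ebad : Set ((ℕ → 𝒳) × (Ωs × Ωr)) :=
    (MeasurableEquiv.prodAssoc (α := (ℕ → 𝒳)) (β := Ωs) (γ := Ωr)).symm ⁻¹' E2 with hEbaddef
  have hEbadmeas : MeasurableSet Ebad :=
    (MeasurableEquiv.prodAssoc.symm.measurable) hE2meas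
  have hEbadmem : ∀ q : (ℕ → 𝒳) × (Ωs × Ωr), q ∈ Ebad ↔ K (α * r T q.2.2) ≤ N' (g q) := by
    rintro ⟨x, w, a⟩
    rfl
  set Dneg : Set ((ℕ → 𝒳) × (Ωs × Ωr)) := {q | r T q.2.2 ≤ 0} with hDnegdef
  have hDneg : μ Dneg = 0 := by
    have h2 : μr {a | r T a ≤ 0} = 0 := by
      have h3 := (MeasureTheory.ae_iff).1 (hrpos T)
      have h4 : {a | ¬ 0 < r T a} = {a | r T a ≤ 0} := by
        ext a; simp [not_lt]
      rwa [h4] at h3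
    have h1 : Dneg = (Set.univ : Set (ℕ → 𝒳)) ×ˢ ((Set.univ : Set Ωs) ×ˢ {a | r T a ≤ 0}) := by
      ext q; simp [hDnegdef, Set.mem_prod]
    rw [h1, hμdef, Measure.prod_prod, Measure.prod_prod, h2, mul_zero, mul_zero]
  set G : Set ((ℕ → 𝒳) × (Ωs × Ωr)) :=
    {q : (ℕ → 𝒳) × (Ωs × Ωr) |
      T ∈ {t : ℕ | 1 ≤ t ∧ (t : ℕ∞) ≤ τ q.1 ∧
        M t q.1 ≤ quantileStat (α * r t q.2.2)
          ((M t q.1) ::ₘ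
            Multiset.map (fun j => ML t j q.2.1) (Finset.univ : Finset (Fin B)).val)}} with hGdef
  -- inclusion of the bad part
  have hincl : S \ G ⊆ (Ebad ∪ Dneg) ∪ (g ⁻¹' D0) := by
    rintro q ⟨hqS, hqG⟩
    by_cases hra : r T q.2.2 ≤ 0
    · exact Or.inl (Or.inr hra)
    push_neg at hra
    by_cases hDq : q ∈ g ⁻¹' D0
    · exact Or.inr hDq
    refine Or.inl (Or.inl ?_)
    have hYeq : ∀ i, Y i (g q) = Y' i (g q) := by
      have := hDq
      simp only [Set.mem_preimage, hD0def, Set.mem_setOf_eq, not_not] at this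
      exact this
    have hc : 0 < α * r T q.2.2 := mul_pos hα0 hra
    set c := α * r T q.2.2 with hcdef
    set vML : Multiset EReal :=
      (M T q.1) ::ₘ Multiset.map (fun j => ML T j q.2.1) (Finset.univ : Finset (Fin B)).val
      with hvMLdef
    have hlt : quantileStat c vML < M T q.1 := by
      refine not_le.1 fun hle => hqG ?_
      simp only [hGdef, Set.mem_setOf_eq]
      exact ⟨hT, hqS, hle⟩
    have hcard : Multiset.card vML = B + 1 := by
      simp [hvMLdef]
    have hceil_le : ⌈(1 - c) * ((B+1 : ℕ) : ℝ)⌉₊ ≤ B + 1 := by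
      rw [Nat.ceil_le]
      have hB : (0:ℝ) < ((B+1:ℕ):ℝ) := by positivity
      nlinarith
    have hidx : ⌈(1 - c) * ((Multiset.card vML : ℕ) : ℝ)⌉₊ - 1 < Multiset.card vML := by
      rw [hcard]
      omega
    have h1 := (quantileStat_lt_iff_aux hidx (M T q.1)).1 hlt
    rw [hcard] at h1
    set m : EReal := M T q.1 with hmdef
    -- countP of the truncated multiset vs the untruncated one
    have hcnt1 : Multiset.countP (fun x => x < m) vML
        = (Finset.univ.filter fun j : Fin B => ML T j q.2.1 < m).card := by
      rw [hvMLdef, Multiset.countP_cons, Multiset.countP_map, if_neg (lt_irrefl m), add_zero,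
        Finset.card_def, Finset.filter_val]
    have hcnt2 : (Finset.univ.filter fun j : Fin B => ML T j q.2.1 < m).card
        ≤ (Finset.univ.filter fun j : Fin B => Minf T j q.2.1 < m).card := by
      refine Finset.card_le_card fun j hj => ?_
      simp only [Finset.mem_filter, Finset.mem_univ, true_and] at hj ⊢
      exact lt_of_le_of_lt (hLB T j q.2.1) hj
    have hY0 : Y 0 (g q) = m := rfl
    have hYsucc : ∀ j : Fin B, Y j.succ (g q) = Minf T j q.2.1 := by
      intro j
      simp [hYdef, simTuple, hgdef]
    have hNeq : N (g q) = (Finset.univ.filter fun j : Fin B => Minf T j q.2.1 < m).card := by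
      show (Finset.univ.filter fun i => Y i (g q) < Y 0 (g q)).card
        = (Finset.univ.filter fun j : Fin B => Minf T j q.2.1 < m).card
      rw [Finset.card_filter, Finset.card_filter, Fin.sum_univ_succ]
      simp only [hY0]
      rw [if_neg (lt_irrefl m), zero_add]
      refine Finset.sum_congr rfl fun j _ => ?_
      simp only [hYsucc j]
    have hNN' : N (g q) = N' (g q) := by
      show (Finset.univ.filter fun i => Y i (g q) < Y 0 (g q)).card
        = (Finset.univ.filter fun i => Y' i (g q) < Y' 0 (g q)).card
      refine congrArg Finset.card (Finset.filter_congr fun i _ => ?_)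
      rw [hYeq i, hYeq 0]
    rw [hEbadmem]
    have hfinal : K c ≤ N' (g q) := by
      rw [hKdef]
      rw [← hNN', hNeq]
      calc (⌈(1 - c) * ((B+1 : ℕ) : ℝ)⌉₊ - 1) + 1
          ≤ Multiset.countP (fun x => x < m) vML := by
            exact h1
        _ = (Finset.univ.filter fun j : Fin B => ML T j q.2.1 < m).card := hcnt1
        _ ≤ (Finset.univ.filter fun j : Fin B => Minf T j q.2.1 < m).card := hcnt2
    exact hfinal
  -- measure of the bad event
  have hEbadBound : μ Ebad ≤ ENNReal.ofReal α * p := by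
    have hassoc := MeasureTheory.measurePreserving_prodAssoc (P T) μs μr
    have h3 : (MeasurableEquiv.prodAssoc :
        ((ℕ → 𝒳) × Ωs) × Ωr ≃ᵐ (ℕ → 𝒳) × Ωs × Ωr) ⁻¹' Ebad = E2 := by
      rw [hEbaddef, ← Set.preimage_comp]
      have : ((MeasurableEquiv.prodAssoc (α := (ℕ → 𝒳)) (β := Ωs) (γ := Ωr)).symm :
          (ℕ → 𝒳) × Ωs × Ωr → ((ℕ → 𝒳) × Ωs) × Ωr) ∘ (MeasurableEquiv.prodAssoc :
          ((ℕ → 𝒳) × Ωs) × Ωr ≃ᵐ (ℕ → 𝒳) × Ωs × Ωr) = id := by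
        funext z
        exact MeasurableEquiv.symm_apply_apply _ _
      rw [this, Set.preimage_id]
    have h1 : μ Ebad = (((P T).prod μs).prod μr) E2 := by
      rw [hμdef, ← hassoc.measure_preimage hEbadmeas.nullMeasurableSet, h3]
    rw [h1, Measure.prod_apply_symm hE2meas]
    have hslicemem : ∀ a : Ωr, (fun pq : (ℕ → 𝒳) × Ωs => (pq, a)) ⁻¹' E2
        = {pq | K (α * r T a) ≤ N' pq} := fun a => rfl
    have hslice : ∀ᵐ a ∂μr,
        ((P T).prod μs) ((fun pq : (ℕ → 𝒳) × Ωs => (pq, a)) ⁻¹' E2)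
          ≤ ENNReal.ofReal (α * r T a) := by
      filter_upwards [hrpos T] with a ha
      rw [hslicemem a]
      have hc : 0 < α * r T a := mul_pos hα0 ha
      have hcongr : ((P T).prod μs) {pq | K (α * r T a) ≤ N' pq}
          = ((P T).prod μs) {pq | K (α * r T a) ≤ N pq} := by
        refine measure_congr ?_
        rw [Filter.eventuallyEq_set]
        filter_upwards [haeY] with pq hpq
        have hNp : N pq = N' pq := by
          rw [hNdef, hN'def]
          refine congrArg Finset.card (Finset.filter_congr fun i _ => ?_)
          rw [hpq i, hpq 0]
        simp only [Set.mem_setOf_eq, hNp]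
      have hcb := conformal_count_bound_aux hindep hid (K (α * r T a))
      have hdb := div_bound_aux (n := B + 1) (by omega) hc
      exact le_trans (le_of_eq hcongr) (le_trans hcb hdb)
    calc ∫⁻ a, ((P T).prod μs) ((fun pq : (ℕ → 𝒳) × Ωs => (pq, a)) ⁻¹' E2) ∂μr
        ≤ ∫⁻ a, ENNReal.ofReal (α * r T a) ∂μr := lintegral_mono_ae hslice
      _ = ENNReal.ofReal (∫ a, α * r T a ∂μr) := by
          rw [MeasureTheory.ofReal_integral_eq_lintegral_ofReal
            ((hrint T).const_mul α) ((hrpos T).mono fun a ha => mul_nonneg hα0.le ha.le)]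
      _ = ENNReal.ofReal (α * p.toReal) := by
          rw [MeasureTheory.integral_const_mul, hrunb T]
      _ = ENNReal.ofReal α * p := by
          rw [ENNReal.ofReal_mul hα0.le, ENNReal.ofReal_toReal hptop]
  -- assembling
  have hSdiff : μ (S \ G) ≤ ENNReal.ofReal α * p := by
    calc μ (S \ G) ≤ μ ((Ebad ∪ Dneg) ∪ (g ⁻¹' D0)) := measure_mono hincl
      _ ≤ μ (Ebad ∪ Dneg) + μ (g ⁻¹' D0) := measure_union_le _ _
      _ ≤ (μ Ebad + μ Dneg) + μ (g ⁻¹' D0) := add_le_add_left (measure_union_le _ _) _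
      _ = μ Ebad := by rw [hDneg, hgD0, add_zero, add_zero]
      _ ≤ ENNReal.ofReal α * p := hEbadBound
  have hsplit : p ≤ μ (S ∩ G) + ENNReal.ofReal α * p := by
    calc p = μ S := hμS.symm
      _ ≤ μ ((S ∩ G) ∪ (S \ G)) := by
          refine measure_mono fun q hq => ?_
          by_cases hG : q ∈ G
          · exact Or.inl ⟨hq, hG⟩
          · exact Or.inr ⟨hq, hG⟩
      _ ≤ μ (S ∩ G) + μ (S \ G) := measure_union_le _ _
      _ ≤ μ (S ∩ G) + ENNReal.ofReal α * p := add_le_add_right hSdiff _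
  rw [ProbabilityTheory.cond_apply hSm, hμS]
  have hmain : ENNReal.ofReal (1-α) * p ≤ μ (S ∩ G) := by
    have hne : ENNReal.ofReal α * p ≠ ⊤ := ENNReal.mul_ne_top ENNReal.ofReal_ne_top hptop
    have hsum2 : ENNReal.ofReal (1-α) * p + ENNReal.ofReal α * p = p := by
      rw [← add_mul, ← ENNReal.ofReal_add (by linarith) hα0.le]
      norm_num
    rw [← ENNReal.add_le_add_iff_right hne, hsum2]
    exact hsplit
  calc ENNReal.ofReal (1-α) = ENNReal.ofReal (1-α) * p * p⁻¹ := by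
        rw [mul_assoc, ENNReal.mul_inv_cancel hpne hptop, mul_one]
    _ ≤ μ (S ∩ G) * p⁻¹ := mul_le_mul_left hmain _
    _ = p⁻¹ * μ (S ∩ G) := mul_comm _ _

end SeqChange
end
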